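/- Let U be an update procedure of countable ordinal α, let β < α be a limit ordinal, and let g be a sequence of ordinal β. If U_g has a U_g-generated finite zero, then there exists γ < β such that U_{g_{<γ}} has a U_{g_{<γ}}-generated finite zero (Reduction Lemma, limit case, part 2). -/

import Mathlib

/-- Transfinite sequences of functions are modeled as functions on all ordinals;
an update procedure of ordinal `α` only depends on (and only updates) the
entries with index below `α`, and a "sequence of ordinal `β`" is read off from
its entries with index below `β`. -/
abbrev OSeq := Ordinal → ℕ → ℕ

/-- `U` is an update procedure of ordinal `α`. -/
def IsUpdateProc (α : Ordinal) (U : OSeq → Option (Ordinal × ℕ × ℕ)) : Prop :=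
  (∀ f : OSeq, ∃ A : Finset (Ordinal × ℕ), (∀ p ∈ A, p.1 < α) ∧
      ∀ g : OSeq, (∀ p ∈ A, g p.1 p.2 = f p.1 p.2) → U g = U f) ∧
  (∀ (f : OSeq) (β : Ordinal) (n m : ℕ), U f = some (β, n, m) → β < α) ∧
  (∀ (f g : OSeq) (β : Ordinal) (n m i j : ℕ),
      (∀ γ, γ < β → f γ = g γ) →
      U f = some (β, n, m) → g β n = m → U g = some (β, i, j) → i ≠ n)

/-- A sequence is finite (below `α`) if it has nonzero values in only
finitely many places. -/
def OFinite (α : Ordinal) (f : OSeq) : Prop :=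
  Set.Finite {p : Ordinal × ℕ | p.1 < α ∧ f p.1 p.2 ≠ 0}

/-- Controlled update `f ⊕ u`: update the `γ`-th function at `n` to value `m`
and erase (reset to `0`) everything of higher index. -/
noncomputable def oplus (f : OSeq) : Option (Ordinal × ℕ × ℕ) → OSeq
  | none => f
  | some (γ, n, m) => fun β x =>
      if β < γ then f β x
      else if β = γ then (if x = n then m else f β x)
      else 0

/-- The learning process generated by `U`:
`U^(0)` is the constantly `0` sequence and `U^(i+1) = U^(i) ⊕ U(U^(i))`. -/
noncomputable def learnProc (U : OSeq → Option (Ordinal × ℕ × ℕ)) : ℕ → OSeq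
  | 0 => fun _ _ => 0
  | i + 1 => oplus (learnProc U i) (U (learnProc U i))

/-- `f` is `U`-generated. -/
def IsGenerated (U : OSeq → Option (Ordinal × ℕ × ℕ)) (f : OSeq) : Prop :=
  ∃ i : ℕ, f = learnProc U i

/-- Concatenation `g * f` of a sequence `g` of ordinal `β` with a sequence `f`:
entries below `β` come from `g`, higher entries from `f` (shifted by `β`). -/
noncomputable def concatSeq (β : Ordinal) (g f : OSeq) : OSeq :=
  fun δ => if δ < β then g δ else f (δ - β)

/-- The shifted procedure `U_g` (for `g` a sequence of ordinal `β`):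
`U_g f = (γ,n,m)` if `U (g * f) = (β + γ, n, m)`, and `U_g f = ∅` otherwise. -/
noncomputable def shiftU (U : OSeq → Option (Ordinal × ℕ × ℕ)) (β : Ordinal)
    (g : OSeq) : OSeq → Option (Ordinal × ℕ × ℕ) :=
  fun f =>
    match U (concatSeq β g f) with
    | none => none
    | some (δ, n, m) => if β ≤ δ then some (δ - β, n, m) else none

/-- The constantly zero sequence. -/
def zeroSeq : OSeq := fun _ _ => 0


/-- Every stage of a learning process has only finitely many nonzero entries. -/
lemma learnProc_nonzero_finite (V : OSeq → Option (Ordinal × ℕ × ℕ)) (j : ℕ) :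
    {p : Ordinal × ℕ | learnProc V j p.1 p.2 ≠ 0}.Finite := by
  induction j with
  | zero =>
      convert Set.finite_empty
      ext p; simp [learnProc]
  | succ j ih =>
      rcases hV : V (learnProc V j) with _ | ⟨δ, n, m⟩
      · have h : learnProc V (j+1) = learnProc V j := by
          simp [learnProc, hV, oplus]
        rw [h]; exact ih
      · apply Set.Finite.subset (ih.union (Set.finite_singleton (δ, n)))
        intro p hp
        simp only [Set.mem_setOf_eq, learnProc, hV, oplus] at hp
        by_cases h1 : p.1 < δ
        · exact Or.inl (by simpa [h1] using hp)
        · by_cases h2 : p.1 = δ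
          · by_cases h3 : p.2 = n
            · exact Or.inr (by simp [Prod.ext_iff, h2, h3])
            · exact Or.inl (by simpa [h1, h2, h3] using hp)
          · simp [h1, h2] at hp

/-- Reduction Lemma (limit case, part 2): let `U` be an update procedure of
countable ordinal `α`, `β < α` a limit ordinal, and `g` a sequence of ordinal
`β`. If `U_g` has a `U_g`-generated finite zero, then there is `γ < β` such
that `U_{g_{<γ}}` has a `U_{g_{<γ}}`-generated finite zero. -/
theorem reduction_lemma_limit_part2 (α : Ordinal)
    (hcount : α.card ≤ Cardinal.aleph0)
    (U : OSeq → Option (Ordinal × ℕ × ℕ)) (hU : IsUpdateProc α U)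
    (β : Ordinal) (hβα : β < α) (hβ : Order.IsSuccLimit β) (g : OSeq)
    (hz : ∃ f : OSeq, IsGenerated (shiftU U β g) f ∧
      OFinite (α - β) f ∧ shiftU U β g f = none) :
    ∃ γ, γ < β ∧ ∃ f : OSeq, IsGenerated (shiftU U γ g) f ∧
      OFinite (α - γ) f ∧ shiftU U γ g f = none := by
  classical
  obtain ⟨hcont, _, _⟩ := hU
  choose A hAlt hA using hcont
  obtain ⟨f0, ⟨i0, hfgen⟩, _, hfzero⟩ := hz
  set L : ℕ → OSeq := learnProc (shiftU U β g) with hL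
  have hex : ∃ j, shiftU U β g (L j) = none := ⟨i0, by rw [hfgen] at hfzero; exact hfzero⟩
  set i := Nat.find hex with hidef
  have hzi : shiftU U β g (L i) = none := Nat.find_spec hex
  have hmin : ∀ j < i, shiftU U β g (L j) ≠ none := fun j hj => Nat.find_min hex hj
  -- the finite set of "low" coordinates to avoid
  set d0 : Finset Ordinal := (U (concatSeq β g (L i))).elim ∅ (fun q => {q.1}) with hd0
  set t : Finset Ordinal :=
    (((Finset.range (i+1)).biUnion
        (fun j => (A (concatSeq β g (L j))).image Prod.fst)) ∪ d0).filter (· < β) with ht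
  have htβ : ∀ x ∈ t, x < β := by
    intro x hx
    exact (Finset.mem_filter.1 hx).2
  set γ : Ordinal := t.sup id + 1 with hγdef
  have hsupβ : t.sup id < β := (Finset.sup_lt_iff hβ.pos).2 htβ
  have hγβ : γ < β := by
    rw [hγdef, Ordinal.add_one_eq_succ]; exact hβ.succ_lt hsupβ
  have htγ : ∀ x ∈ t, x < γ := by
    intro x hx
    exact lt_of_le_of_lt (Finset.le_sup (f := id) hx) (lt_add_one _)
  have hγβle : γ ≤ β := le_of_lt hγβ
  set c : Ordinal := β - γ with hcdef
  have hγc : γ + c = β := Ordinal.add_sub_cancel_of_le hγβle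
  set H : ℕ → OSeq := learnProc (shiftU U γ g) with hH
  -- sub arithmetic helper
  have hsub : ∀ e : Ordinal, β ≤ e → e - γ = c + (e - β) := by
    intro e he
    have h1 : γ + (c + (e - β)) = e := by
      rw [← add_assoc, hγc, Ordinal.add_sub_cancel_of_le he]
    conv_lhs => rw [← h1]
    rw [Ordinal.add_sub_cancel]
  -- the invariant
  have key : ∀ j, (∀ δ, δ < c → ∀ x, H j δ x = 0) ∧ (∀ ε x, H j (c + ε) x = L j ε x) →
      j ≤ i → U (concatSeq γ g (H j)) = U (concatSeq β g (L j)) := by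
    intro j Pj hj
    apply hA
    intro p hp
    by_cases h1 : p.1 < γ
    · have h2 : p.1 < β := lt_of_lt_of_le h1 hγβle
      simp [concatSeq, h1, h2]
    · have h2 : ¬ p.1 < β := by
        intro h2
        apply h1
        apply htγ
        rw [ht]
        refine Finset.mem_filter.2 ⟨Finset.mem_union_left _ ?_, h2⟩
        refine Finset.mem_biUnion.2 ⟨j, Finset.mem_range.2 (Nat.lt_succ_of_le hj), ?_⟩
        exact Finset.mem_image_of_mem Prod.fst hp
      have hβp : β ≤ p.1 := not_lt.1 h2
      have harith : p.1 - γ = c + (p.1 - β) := hsub p.1 hβp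
      simp only [concatSeq, if_neg h1, if_neg h2, harith]
      exact Pj.2 (p.1 - β) p.2
  have inv : ∀ j, j ≤ i →
      (∀ δ, δ < c → ∀ x, H j δ x = 0) ∧ (∀ ε x, H j (c + ε) x = L j ε x) := by
    intro j
    induction j with
    | zero =>
        intro _
        constructor
        · intro δ _ x; simp [hH, learnProc]
        · intro ε x; simp [hH, hL, learnProc]
    | succ j ih =>
        intro hji
        have hj : j ≤ i := Nat.le_of_succ_le hji
        have hjlt : j < i := Nat.lt_of_succ_le hji
        have Pj := ih hj
        have hUeq : U (concatSeq γ g (H j)) = U (concatSeq β g (L j)) := key j Pj hj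
        rcases hUv : U (concatSeq β g (L j)) with _ | ⟨e, n, m⟩
        · exact absurd (by simp [shiftU, hUv]) (hmin j hjlt)
        · by_cases hβe : β ≤ e
          swap
          · exact absurd (by simp [shiftU, hUv, hβe]) (hmin j hjlt)
          have hγe : γ ≤ e := le_trans hγβle hβe
          have hLs : L (j+1) = oplus (L j) (some (e - β, n, m)) := by
            simp only [hL] at hUv ⊢
            simp [learnProc, shiftU, hUv, hβe]
          have hHs : H (j+1) = oplus (H j) (some (e - γ, n, m)) := by
            simp only [hH, hL] at hUeq hUv ⊢
            simp [learnProc, shiftU, hUeq, hUv, hγe]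
          have harith : e - γ = c + (e - β) := hsub e hβe
          constructor
          · intro δ hδ x
            have hδlt : δ < e - γ := by
              rw [harith]
              exact lt_of_lt_of_le hδ (le_self_add (a := c) (b := e - β))
            rw [hHs]
            simp only [oplus, if_pos hδlt]
            exact Pj.1 δ hδ x
          · intro ε x
            rw [hHs, hLs]
            simp only [oplus]
            by_cases h1 : ε < e - β
            · have h1' : c + ε < e - γ := by
                rw [harith]; exact (add_lt_add_iff_left c).2 h1
              simp only [if_pos h1', if_pos h1]
              exact Pj.2 ε x
            · have h1' : ¬ c + ε < e - γ := by
                rw [harith]; exact fun hcon => h1 ((add_lt_add_iff_left c).1 hcon)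
              by_cases h2 : ε = e - β
              · have h2' : c + ε = e - γ := by rw [harith, h2]
                simp only [if_neg h1', if_pos h2', if_neg h1, if_pos h2]
                by_cases h3 : x = n
                · simp [h3]
                · simp only [if_neg h3]
                  exact Pj.2 ε x
              · have h2' : ¬ c + ε = e - γ := by
                  rw [harith]
                  exact fun hcon => h2 ((add_right_inj c).1 hcon)
                simp [if_neg h1', if_neg h2', if_neg h1, if_neg h2]
  -- conclusion
  refine ⟨γ, hγβ, H i, ⟨i, rfl⟩, ?_, ?_⟩
  · exact Set.Finite.subset (learnProc_nonzero_finite (shiftU U γ g) i)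
      (fun p hp => hp.2)
  · have hUeq : U (concatSeq γ g (H i)) = U (concatSeq β g (L i)) :=
      key i (inv i le_rfl) le_rfl
    rcases hUv : U (concatSeq β g (L i)) with _ | ⟨δ0, n, m⟩
    · simp [shiftU, hUeq, hUv]
    · have hδ0 : ¬ β ≤ δ0 := by
        intro hcon
        have : shiftU U β g (L i) = some (δ0 - β, n, m) := by
          simp [shiftU, hUv, hcon]
        rw [this] at hzi
        exact Option.some_ne_none _ hzi
      have hδ0β : δ0 < β := not_le.1 hδ0
      have hδ0γ : δ0 < γ := by
        apply htγ
        rw [ht]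
        refine Finset.mem_filter.2 ⟨Finset.mem_union_right _ ?_, hδ0β⟩
        rw [hd0, hUv]
        simp
      simp [shiftU, hUeq, hUv, not_le.2 hδ0γ]
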